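/- If μ_i > 0 for all i and ν_j > 0 for all j, then any maximizer P^max of H over the transportation polytope with marginals μ, ν satisfies P^max_{ij} > 0 for all i, j; in particular there exists η > 0 with P^max_{ij} ≥ η for all i, j. -/
import Mathlib


/-- The transportation polytope with marginals `μ` and `ν`. -/
def transPoly {n m : ℕ} (μ : Fin n → ℝ) (ν : Fin m → ℝ) : Set (Fin n → Fin m → ℝ) :=
  {P | (∀ i j, 0 ≤ P i j) ∧ (∀ i, ∑ j, P i j = μ i) ∧ (∀ j, ∑ i, P i j = ν j)}

/-- Shannon entropy of a matrix with the convention `0 * log 0 = 0`. -/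
noncomputable def shannonH {n m : ℕ} (P : Fin n → Fin m → ℝ) : ℝ :=
  ∑ i, ∑ j, Real.negMulLog (P i j)

/-- Pointwise Gibbs bound. -/
lemma gibbs_pt {f g : ℝ} (hf : 0 ≤ f) (hg : 0 < g) :
    f * Real.log (g / f) ≤ g - f := by
  rcases eq_or_lt_of_le hf with h | h
  · simp [← h]; linarith
  · have hlog := Real.log_le_sub_one_of_pos (div_pos hg h)
    have : f * Real.log (g / f) ≤ f * (g / f - 1) := by
      exact mul_le_mul_of_nonneg_left hlog hf
    calc f * Real.log (g / f) ≤ f * (g / f - 1) := this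
      _ = g - f := by field_simp

/-- Decomposition of negMulLog relative to a positive reference. -/
lemma negMulLog_decomp {f g : ℝ} (hf : 0 ≤ f) (hg : 0 < g) :
    Real.negMulLog f = f * Real.log (g / f) - f * Real.log g := by
  rcases eq_or_lt_of_le hf with h | h
  · simp [← h, Real.negMulLog]
  · rw [Real.log_div hg.ne' h.ne']
    unfold Real.negMulLog
    ring

/-- Cross-entropy against a product reference only depends on the marginals. -/
lemma cross_sum {n m : ℕ} (μ : Fin n → ℝ) (ν : Fin m → ℝ)
    (hμ : ∀ i, 0 < μ i) (hν : ∀ j, 0 < ν j)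
    (F : Fin n → Fin m → ℝ)
    (hrow : ∀ i, ∑ j, F i j = μ i) (hcol : ∀ j, ∑ i, F i j = ν j) :
    ∑ i, ∑ j, F i j * Real.log (μ i * ν j)
      = ∑ i, μ i * Real.log (μ i) + ∑ j, ν j * Real.log (ν j) := by
  have : ∀ i j, F i j * Real.log (μ i * ν j)
      = F i j * Real.log (μ i) + F i j * Real.log (ν j) := by
    intro i j
    rw [Real.log_mul (hμ i).ne' (hν j).ne']
    ring
  simp_rw [this, Finset.sum_add_distrib]
  congr 1
  · congr 1; ext i
    rw [← Finset.sum_mul, hrow]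
  · rw [Finset.sum_comm]
    congr 1; ext j
    rw [← Finset.sum_mul, hcol]

/-- If the marginals are strictly positive, every maximizer of `H` over the
transportation polytope has strictly positive entries, and in particular is
bounded below by some `η > 0`. -/
theorem stmt8 {n m : ℕ} (μ : Fin n → ℝ) (ν : Fin m → ℝ)
    (hμ : ∀ i, 0 < μ i) (hν : ∀ j, 0 < ν j)
    (hμ1 : ∑ i, μ i = 1) (hν1 : ∑ j, ν j = 1)
    (Pmax : Fin n → Fin m → ℝ) (hPmax : Pmax ∈ transPoly μ ν)
    (hopt : ∀ P ∈ transPoly μ ν, shannonH P ≤ shannonH Pmax) :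
    (∀ i j, 0 < Pmax i j) ∧ ∃ η > (0 : ℝ), ∀ i j, η ≤ Pmax i j := by
  obtain ⟨hpos, hrow, hcol⟩ := hPmax
  -- the product coupling
  set Q : Fin n → Fin m → ℝ := fun i j => μ i * ν j with hQdef
  have hQrow : ∀ i, ∑ j, Q i j = μ i := by
    intro i; rw [hQdef, ← Finset.mul_sum, hν1, mul_one]
  have hQcol : ∀ j, ∑ i, Q i j = ν j := by
    intro j; rw [hQdef, ← Finset.sum_mul, hμ1, one_mul]
  have hQmem : Q ∈ transPoly μ ν :=
    ⟨fun i j => (mul_pos (hμ i) (hν j)).le, hQrow, hQcol⟩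
  have hQpos : ∀ i j, 0 < Q i j := fun i j => mul_pos (hμ i) (hν j)
  have hmain : ∀ i j, 0 < Pmax i j := by
    by_contra hcon
    push_neg at hcon
    obtain ⟨i0, j0, hij⟩ := hcon
    have hz : Pmax i0 j0 = 0 := le_antisymm hij (hpos i0 j0)
    -- strict Gibbs inequality (via flattening to Fin n × Fin m)
    have hstrict : ∑ p : Fin n × Fin m, Pmax p.1 p.2 * Real.log (Q p.1 p.2 / Pmax p.1 p.2)
        < ∑ p : Fin n × Fin m, (Q p.1 p.2 - Pmax p.1 p.2) := by
      apply Finset.sum_lt_sum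
      · intro p _
        exact gibbs_pt (hpos p.1 p.2) (hQpos p.1 p.2)
      · refine ⟨(i0, j0), Finset.mem_univ _, ?_⟩
        simp only [hz, mul_zero, zero_mul, sub_zero]
        exact hQpos i0 j0
    have hsum0 : ∑ p : Fin n × Fin m, (Q p.1 p.2 - Pmax p.1 p.2) = 0 := by
      rw [Finset.sum_sub_distrib]
      have h1 : ∑ p : Fin n × Fin m, Q p.1 p.2 = 1 := by
        rw [Fintype.sum_prod_type]
        simp_rw [hQrow]; exact hμ1
      have h2 : ∑ p : Fin n × Fin m, Pmax p.1 p.2 = 1 := by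
        rw [Fintype.sum_prod_type]
        simp_rw [hrow]; exact hμ1
      rw [h1, h2]; ring
    set S := ∑ i, μ i * Real.log (μ i) + ∑ j, ν j * Real.log (ν j) with hS
    have hHP : shannonH Pmax
        = ∑ p : Fin n × Fin m, Pmax p.1 p.2 * Real.log (Q p.1 p.2 / Pmax p.1 p.2) - S := by
      rw [shannonH, hS, ← cross_sum μ ν hμ hν Pmax hrow hcol]
      rw [Fintype.sum_prod_type, ← Finset.sum_sub_distrib]
      refine Finset.sum_congr rfl fun i _ => ?_
      rw [← Finset.sum_sub_distrib]
      refine Finset.sum_congr rfl fun j _ => ?_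
      exact negMulLog_decomp (hpos i j) (hQpos i j)
    have hHQ : shannonH Q = -S := by
      rw [shannonH, hS, ← cross_sum μ ν hμ hν Q hQrow hQcol]
      rw [eq_neg_iff_add_eq_zero, ← Finset.sum_add_distrib]
      apply Finset.sum_eq_zero
      intro i _
      rw [← Finset.sum_add_distrib]
      apply Finset.sum_eq_zero
      intro j _
      have := negMulLog_decomp (hQpos i j).le (hQpos i j)
      rw [div_self (hQpos i j).ne', Real.log_one, mul_zero, zero_sub] at this
      rw [this]; ring
    have : shannonH Pmax < shannonH Q := by
      rw [hHP, hHQ]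
      have := lt_of_lt_of_le hstrict (le_of_eq hsum0)
      linarith
    exact absurd (hopt Q hQmem) (not_le.mpr this)
  refine ⟨hmain, ?_⟩
  have hn : 0 < n := by
    rcases Nat.eq_zero_or_pos n with h | h
    · subst h; simp at hμ1
    · exact h
  have hm : 0 < m := by
    rcases Nat.eq_zero_or_pos m with h | h
    · subst h; simp at hν1
    · exact h
  haveI : Nonempty (Fin n × Fin m) := ⟨(⟨0, hn⟩, ⟨0, hm⟩)⟩
  obtain ⟨p, _, hp⟩ := Finset.exists_min_image (Finset.univ : Finset (Fin n × Fin m))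
    (fun p => Pmax p.1 p.2) Finset.univ_nonempty
  exact ⟨Pmax p.1 p.2, hmain p.1 p.2, fun i j => hp (i, j) (Finset.mem_univ _)⟩
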